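/- Let F : (ℝᵐ,0) → (ℝᵖ,0) and G : (ℝᵖ,0) → (ℝᵏ,0), with m ≥ p ≥ k ≥ 2, be analytic map germs such that F has isolated singular value (Sing F ⊆ F⁻¹(0)) and G has an isolated singular point at the origin (Sing G ⊆ {0}). Then the Milnor sets of H = G ∘ F and F satisfy the inclusion M(H) ∖ H⁻¹(0) ⊆ M(F) ∖ F⁻¹(0). -/

import Mathlib

open Metric Set RealInnerProductSpace

/-- The singular set of a map `G : ℝᵐ → ℝᵖ`: points where the derivative has rank `< p`. -/
noncomputable def singSet {m p : ℕ}
    (G : EuclideanSpace ℝ (Fin m) → EuclideanSpace ℝ (Fin p)) :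
    Set (EuclideanSpace ℝ (Fin m)) :=
  {x | LinearMap.rank
      ((fderiv ℝ G x : EuclideanSpace ℝ (Fin m) →L[ℝ] EuclideanSpace ℝ (Fin p)) :
        EuclideanSpace ℝ (Fin m) →ₗ[ℝ] EuclideanSpace ℝ (Fin p)) < (p : Cardinal)}

/-- The Milnor set of `G`: points that are singular for `G`, or where the gradient of the
distance function `ρ(x) = ‖x‖` lies in the span of the gradients of the components of `G`. -/
noncomputable def milnorSet {m p : ℕ}
    (G : EuclideanSpace ℝ (Fin m) → EuclideanSpace ℝ (Fin p)) :
    Set (EuclideanSpace ℝ (Fin m)) :=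
  {x | x ∈ singSet G ∨
    gradient (fun y : EuclideanSpace ℝ (Fin m) => ‖y‖) x ∈
      Submodule.span ℝ (Set.range fun i : Fin p =>
        gradient (fun y : EuclideanSpace ℝ (Fin m) => G y i) x)}

/-- A continuous linear map between euclidean spaces whose rank is not `< p` is surjective. -/
theorem aux_surj {m p : ℕ} (f : EuclideanSpace ℝ (Fin m) →L[ℝ] EuclideanSpace ℝ (Fin p))
    (h : ¬ LinearMap.rank
      (f : EuclideanSpace ℝ (Fin m) →ₗ[ℝ] EuclideanSpace ℝ (Fin p)) < (p : Cardinal)) :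
    Function.Surjective f := by
  by_contra hs
  apply h
  have hne : LinearMap.range
      (f : EuclideanSpace ℝ (Fin m) →ₗ[ℝ] EuclideanSpace ℝ (Fin p)) ≠ ⊤ := by
    intro hh
    exact hs (by simpa using LinearMap.range_eq_top.mp hh)
  have h1 := Submodule.finrank_lt hne
  rw [finrank_euclideanSpace_fin] at h1
  rw [LinearMap.rank, ← Submodule.finrank_eq_rank]
  exact_mod_cast h1

/-- A surjective continuous linear map into `ℝᵏ` has rank not `< k`. -/
theorem aux_not_lt {m k : ℕ} (f : EuclideanSpace ℝ (Fin m) →L[ℝ] EuclideanSpace ℝ (Fin k))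
    (h : Function.Surjective f) :
    ¬ LinearMap.rank
      (f : EuclideanSpace ℝ (Fin m) →ₗ[ℝ] EuclideanSpace ℝ (Fin k)) < (k : Cardinal) := by
  rw [LinearMap.rank, LinearMap.range_eq_top.mpr (by simpa using h), rank_top,
    ← Module.finrank_eq_rank, finrank_euclideanSpace_fin]
  exact lt_irrefl _

/-- Expansion of a linear map on euclidean space in the standard basis, one coordinate. -/
theorem aux_expand {p k : ℕ} (B : EuclideanSpace ℝ (Fin p) →L[ℝ] EuclideanSpace ℝ (Fin k))
    (w : EuclideanSpace ℝ (Fin p)) (j : Fin k) :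
    B w j = ∑ l, w l * B (EuclideanSpace.single l (1:ℝ)) j := by
  have hw : w = ∑ l, w l • EuclideanSpace.single l (1:ℝ) := by
    ext i
    rw [WithLp.ofLp_sum, Finset.sum_apply]
    simp [EuclideanSpace.single_apply]
  conv_lhs => rw [hw]
  rw [map_sum, WithLp.ofLp_sum, Finset.sum_apply]
  simp

/-- Inner product with the gradient recovers the derivative. -/
theorem aux_inner_grad {m : ℕ} (f : EuclideanSpace ℝ (Fin m) → ℝ)
    (x v : EuclideanSpace ℝ (Fin m)) :
    inner ℝ (gradient f x) v = fderiv ℝ f x v := by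
  simp [gradient, InnerProductSpace.toDual_symm_apply]

/-- If `F` is analytic with isolated singular value and `G` is analytic with
an isolated singular point at the origin, `m ≥ p ≥ k ≥ 2`, then the Milnor sets of `H = G ∘ F`
and `F` satisfy `M(H) \ H⁻¹(0) ⊆ M(F) \ F⁻¹(0)`. -/
theorem stmt1 {m p k : ℕ} (hk : 2 ≤ k) (hkp : k ≤ p) (hpm : p ≤ m)
    (F : EuclideanSpace ℝ (Fin m) → EuclideanSpace ℝ (Fin p))
    (G : EuclideanSpace ℝ (Fin p) → EuclideanSpace ℝ (Fin k))
    (hFan : ∀ x, AnalyticAt ℝ F x) (hGan : ∀ y, AnalyticAt ℝ G y)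
    (hF0 : F 0 = 0) (hG0 : G 0 = 0)
    (hFsing : singSet F ⊆ F ⁻¹' {0})
    (hGsing : singSet G ⊆ {0}) :
    milnorSet (G ∘ F) \ (G ∘ F) ⁻¹' {0} ⊆ milnorSet F \ F ⁻¹' {0} := by
  rintro x ⟨hxM, hxH⟩
  have hHx : G (F x) ≠ 0 := by
    intro h
    exact hxH (by simpa [Function.comp] using h)
  have hFx : F x ≠ 0 := fun h => hHx (by rw [h, hG0])
  have hxF : x ∉ singSet F := fun h => hFx (hFsing h)
  have hyG : F x ∉ singSet G := fun h => hFx (hGsing h)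
  have hA : Function.Surjective ⇑(fderiv ℝ F x) := aux_surj _ hxF
  have hB : Function.Surjective ⇑(fderiv ℝ G (F x)) := aux_surj _ hyG
  have hdF : DifferentiableAt ℝ F x := (hFan x).differentiableAt
  have hdG : DifferentiableAt ℝ G (F x) := (hGan (F x)).differentiableAt
  have hcomp : fderiv ℝ (G ∘ F) x = (fderiv ℝ G (F x)).comp (fderiv ℝ F x) :=
    fderiv_comp x hdG hdF
  have hgrad : gradient (fun y : EuclideanSpace ℝ (Fin m) => ‖y‖) x ∈
      Submodule.span ℝ (Set.range fun j : Fin k =>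
        gradient (fun y : EuclideanSpace ℝ (Fin m) => (G ∘ F) y j) x) := by
    rcases hxM with h | h
    · exfalso
      have hns := aux_not_lt ((fderiv ℝ G (F x)).comp (fderiv ℝ F x))
        (by rw [ContinuousLinearMap.coe_comp']; exact hB.comp hA)
      have h' : LinearMap.rank ((fderiv ℝ (G ∘ F) x :
          EuclideanSpace ℝ (Fin m) →L[ℝ] EuclideanSpace ℝ (Fin k)) :
          EuclideanSpace ℝ (Fin m) →ₗ[ℝ] EuclideanSpace ℝ (Fin k)) < (k : Cardinal) := h
      rw [hcomp] at h'
      exact hns h'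
    · exact h
  refine ⟨Or.inr ?_, fun hmem => hFx (by simpa using hmem)⟩
  refine Submodule.span_le.mpr ?_ hgrad
  rintro _ ⟨j, rfl⟩
  have hHj : fderiv ℝ (fun y => (G ∘ F) y j) x =
      (EuclideanSpace.proj j : EuclideanSpace ℝ (Fin k) →L[ℝ] ℝ).comp (fderiv ℝ (G ∘ F) x) := by
    rw [show (fun y => (G ∘ F) y j) = (⇑(EuclideanSpace.proj j : EuclideanSpace ℝ (Fin k) →L[ℝ] ℝ)) ∘ (G ∘ F) from rfl,
      fderiv_comp x (EuclideanSpace.proj j : EuclideanSpace ℝ (Fin k) →L[ℝ] ℝ).differentiableAt (hdG.comp x hdF),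
      (EuclideanSpace.proj j : EuclideanSpace ℝ (Fin k) →L[ℝ] ℝ).fderiv]
  have hFl : ∀ l : Fin p, fderiv ℝ (fun y => F y l) x =
      (EuclideanSpace.proj l : EuclideanSpace ℝ (Fin p) →L[ℝ] ℝ).comp (fderiv ℝ F x) := fun l => by
    rw [show (fun y => F y l) = (⇑(EuclideanSpace.proj l : EuclideanSpace ℝ (Fin p) →L[ℝ] ℝ)) ∘ F from rfl,
      fderiv_comp x (EuclideanSpace.proj l : EuclideanSpace ℝ (Fin p) →L[ℝ] ℝ).differentiableAt hdF,
      (EuclideanSpace.proj l : EuclideanSpace ℝ (Fin p) →L[ℝ] ℝ).fderiv]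
  have hkey : gradient (fun y : EuclideanSpace ℝ (Fin m) => (G ∘ F) y j) x =
      ∑ l : Fin p, (fderiv ℝ G (F x) (EuclideanSpace.single l (1:ℝ)) j) •
        gradient (fun y : EuclideanSpace ℝ (Fin m) => F y l) x := by
    apply ext_inner_right ℝ
    intro v
    rw [aux_inner_grad, sum_inner]
    simp_rw [real_inner_smul_left, aux_inner_grad]
    rw [hHj, hcomp]
    simp only [ContinuousLinearMap.comp_apply, PiLp.proj_apply, hFl]
    rw [aux_expand]
    exact Finset.sum_congr rfl fun l _ => mul_comm _ _
  beta_reduce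
  rw [SetLike.mem_coe, hkey]
  exact Submodule.sum_mem _ fun l _ =>
    Submodule.smul_mem _ _ (Submodule.subset_span ⟨l, rfl⟩)
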